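/- Let M be a maximum matching in a finite simple graph G with unmatched vertex set I. Then the number of vertices of I that are adjacent to both endpoints of some edge of M is at most |M|. -/

import Mathlib

open Finset

/-- Number of graph homomorphisms from the (loopless or looped) graph given by
relation `G` on `U` to the graph given by relation `H` on `V`. -/
def HomCount {U V : Type*} [Fintype U] [DecidableEq U] [Fintype V] [DecidableEq V]
    (G : U → U → Prop) [DecidableRel G] (H : V → V → Prop) [DecidableRel H] : ℕ :=
  Fintype.card {f : U → V // ∀ a b, G a b → H (f a) (f b)}

/-- Degree of a vertex in a graph with loops (a loop counts once). -/
def hdeg {V : Type*} [Fintype V] (H : V → V → Prop) [DecidableRel H] (v : V) : ℕ :=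
  (Finset.univ.filter (H v)).card

/-- Adjacency matrix (over ℝ) of the graph with loops given by `H`. -/
def adjMat {V : Type*} [Fintype V] (H : V → V → Prop) [DecidableRel H] : Matrix V V ℝ :=
  fun i j => if H i j then 1 else 0

/-- Adjacency relation of the cycle `C_k` on vertex set `Fin k` (for `k ≥ 3`). -/
def cycAdj (k : ℕ) (i j : Fin k) : Prop :=
  (i.val + 1) % k = j.val ∨ (j.val + 1) % k = i.val

instance (k : ℕ) : DecidableRel (cycAdj k) := fun i j => by
  unfold cycAdj; infer_instance

/-- Adjacency relation of the path `P_k` on vertex set `Fin k`. -/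
def pathAdj (k : ℕ) (i j : Fin k) : Prop :=
  i.val + 1 = j.val ∨ j.val + 1 = i.val

instance (k : ℕ) : DecidableRel (pathAdj k) := fun i j => by
  unfold pathAdj; infer_instance

/-- Adjacency relation of the star `K_{1,x-1}` on `Fin x`, with center `0`. -/
def starAdj (x : ℕ) (i j : Fin x) : Prop :=
  (i.val = 0 ∧ j.val ≠ 0) ∨ (j.val = 0 ∧ i.val ≠ 0)

instance (x : ℕ) : DecidableRel (starAdj x) := fun i j => by
  unfold starAdj; infer_instance

/-- `M` is a matching in the simple graph `G`: a set of edges of `G` that are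
pairwise vertex-disjoint. -/
def IsMatchingIn {U : Type*} (G : SimpleGraph U) (M : Finset (Sym2 U)) : Prop :=
  (∀ e ∈ M, e ∈ G.edgeSet) ∧
    ∀ e ∈ M, ∀ f ∈ M, e ≠ f → ∀ v : U, v ∈ e → v ∉ f

/-- `v` is unmatched by the matching `M` (not covered by any edge of `M`). -/
def UnmatchedBy {U : Type*} (M : Finset (Sym2 U)) (v : U) : Prop :=
  ∀ e ∈ M, v ∉ e

/-- at most `|M|` unmatched vertices are adjacent to both
endpoints of some edge of the maximum matching `M`. -/
theorem unmatched_adjacent_both_endpoints_bound {U : Type*} [Fintype U] [DecidableEq U]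
    (G : SimpleGraph U) (M : Finset (Sym2 U))
    (hM : IsMatchingIn G M)
    (hmax : ∀ M' : Finset (Sym2 U), IsMatchingIn G M' → M'.card ≤ M.card) :
    {y : U | UnmatchedBy M y ∧ ∃ e ∈ M, ∀ v ∈ e, G.Adj y v}.ncard ≤ M.card := by
  classical
  set S := {y : U | UnmatchedBy M y ∧ ∃ e ∈ M, ∀ v ∈ e, G.Adj y v} with hS
  -- Key: no edge of M can have two distinct unmatched vertices adjacent to both endpoints
  have key : ∀ e ∈ M, ∀ y ∈ S, ∀ y' ∈ S, (∀ v ∈ e, G.Adj y v) → (∀ v ∈ e, G.Adj y' v) →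
      y = y' := by
    intro e heM y hy y' hy' hya hy'a
    by_contra hne
    obtain ⟨⟨a, b⟩, hab⟩ := Quot.exists_rep e
    subst hab
    obtain ⟨hyU, -⟩ := hy
    obtain ⟨hy'U, -⟩ := hy'
    have haMem : a ∈ (Quot.mk _ (a, b) : Sym2 U) := by simp [Sym2.mem_iff]
    have hbMem : b ∈ (Quot.mk _ (a, b) : Sym2 U) := by simp [Sym2.mem_iff]
    have hAdjYA : G.Adj y a := hya a haMem
    have hAdjY'B : G.Adj y' b := hy'a b hbMem
    have hYnotE : y ∉ (Quot.mk _ (a, b) : Sym2 U) := hyU _ heM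
    have hY'notE : y' ∉ (Quot.mk _ (a, b) : Sym2 U) := hy'U _ heM
    have hya' : y ≠ a := fun h => hYnotE (h ▸ haMem)
    have hyb : y ≠ b := fun h => hYnotE (h ▸ hbMem)
    have hy'a' : y' ≠ a := fun h => hY'notE (h ▸ haMem)
    have hy'b : y' ≠ b := fun h => hY'notE (h ▸ hbMem)
    -- new matching
    set E1 : Sym2 U := s(y, a) with hE1
    set E2 : Sym2 U := s(y', b) with hE2
    have hAdjAB : G.Adj a b := by
      have := hM.1 _ heM
      exact this
    have hab' : a ≠ b := hAdjAB.ne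
    have hE1ne2 : E1 ≠ E2 := by
      intro h
      rw [hE1, hE2] at h
      rcases Sym2.eq_iff.1 h with ⟨h1, _⟩ | ⟨_, h2⟩
      · exact hne h1
      · exact hy'a' h2.symm
    have hE1notM : E1 ∉ M := by
      intro h
      exact hyU _ h (by simp [hE1])
    have hE2notM : E2 ∉ M := by
      intro h
      exact hy'U _ h (by simp [hE2])
    set M' : Finset (Sym2 U) := insert E1 (insert E2 ((M.erase (Quot.mk _ (a, b))))) with hM'
    -- only e contains a or b among edges of M
    have haOnly : ∀ f ∈ M.erase (Quot.mk _ (a, b)), a ∉ f := by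
      intro f hf
      exact hM.2 _ heM f (Finset.mem_of_mem_erase hf)
        (Ne.symm (Finset.ne_of_mem_erase hf)) a haMem
    have hbOnly : ∀ f ∈ M.erase (Quot.mk _ (a, b)), b ∉ f := by
      intro f hf
      exact hM.2 _ heM f (Finset.mem_of_mem_erase hf)
        (Ne.symm (Finset.ne_of_mem_erase hf)) b hbMem
    have hmem : ∀ f, f ∈ M' ↔ f = E1 ∨ f = E2 ∨ f ∈ M.erase (Quot.mk _ (a, b)) := by
      intro f; simp [hM']
    have hMatch : IsMatchingIn G M' := by
      constructor
      · intro f hf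
        rcases (hmem f).1 hf with rfl | rfl | hf
        · simpa [hE1, SimpleGraph.mem_edgeSet] using hAdjYA
        · simpa [hE2, SimpleGraph.mem_edgeSet] using hAdjY'B
        · exact hM.1 f (Finset.mem_of_mem_erase hf)
      · intro f hf g hg hfg v hvf
        have hvE1 : v ∈ E1 → (v = y ∨ v = a) := by rw [hE1, Sym2.mem_iff]; exact id
        have hvE2 : v ∈ E2 → (v = y' ∨ v = b) := by rw [hE2, Sym2.mem_iff]; exact id
        have hvE1' : (v = y ∨ v = a) → v ∈ E1 := by rw [hE1, Sym2.mem_iff]; exact id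
        have hvE2' : (v = y' ∨ v = b) → v ∈ E2 := by rw [hE2, Sym2.mem_iff]; exact id
        rcases (hmem f).1 hf with hfe | hfe | hfe
        · subst hfe
          rcases (hmem g).1 hg with hge | hge | hge
          · exact absurd hge.symm hfg
          · subst hge
            intro hvg
            rcases hvE1 hvf with h | h <;> rcases hvE2 hvg with h' | h'
            · exact hne (h.symm.trans h')
            · exact hyb (h.symm.trans h')
            · exact hy'a' (h'.symm.trans h)
            · exact hab' (h.symm.trans h')
          · intro hvg
            rcases hvE1 hvf with h | h
            · exact hyU _ (Finset.mem_of_mem_erase hge) (h ▸ hvg)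
            · exact haOnly _ hge (h ▸ hvg)
        · subst hfe
          rcases (hmem g).1 hg with hge | hge | hge
          · subst hge
            intro hvg
            rcases hvE2 hvf with h | h <;> rcases hvE1 hvg with h' | h'
            · exact hne (h'.symm.trans h)
            · exact hy'a' (h.symm.trans h')
            · exact hyb (h'.symm.trans h)
            · exact hab' (h'.symm.trans h)
          · exact absurd hge.symm hfg
          · intro hvg
            rcases hvE2 hvf with h | h
            · exact hy'U _ (Finset.mem_of_mem_erase hge) (h ▸ hvg)
            · exact hbOnly _ hge (h ▸ hvg)
        · rcases (hmem g).1 hg with hge | hge | hge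
          · subst hge
            intro hvg
            rcases hvE1 hvg with h | h
            · exact hyU _ (Finset.mem_of_mem_erase hfe) (h ▸ hvf)
            · exact haOnly _ hfe (h ▸ hvf)
          · subst hge
            intro hvg
            rcases hvE2 hvg with h | h
            · exact hy'U _ (Finset.mem_of_mem_erase hfe) (h ▸ hvf)
            · exact hbOnly _ hfe (h ▸ hvf)
          · exact hM.2 f (Finset.mem_of_mem_erase hfe) g (Finset.mem_of_mem_erase hge) hfg
              v hvf
    have hcard : M'.card = M.card + 1 := by
      have h1 : E1 ∉ insert E2 (M.erase (Quot.mk _ (a, b))) := by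
        simp only [Finset.mem_insert]
        rintro (h | h)
        · exact hE1ne2 h
        · exact hE1notM (Finset.mem_of_mem_erase h)
      have h2 : E2 ∉ M.erase (Quot.mk _ (a, b)) := fun h => hE2notM (Finset.mem_of_mem_erase h)
      rw [hM', Finset.card_insert_of_notMem h1, Finset.card_insert_of_notMem h2,
        Finset.card_erase_of_mem heM]
      have : 1 ≤ M.card := Finset.card_pos.2 ⟨_, heM⟩
      omega
    have := hmax M' hMatch
    omega
  -- choice function
  have hSsub : ∀ y ∈ S, ∃ e ∈ M, ∀ v ∈ e, G.Adj y v := fun y hy => hy.2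
  set g : U → Sym2 U := fun y =>
    if h : ∃ e ∈ M, ∀ v ∈ e, G.Adj y v then h.choose else s(y, y) with hg
  have hgmem : ∀ y ∈ S, g y ∈ M ∧ ∀ v ∈ g y, G.Adj y v := by
    intro y hy
    have h := hSsub y hy
    simp only [hg, dif_pos h]
    exact ⟨h.choose_spec.1, h.choose_spec.2⟩
  have hinj : Set.InjOn g S := by
    intro y hy y' hy' hgy
    obtain ⟨hm, hadj⟩ := hgmem y hy
    obtain ⟨hm', hadj'⟩ := hgmem y' hy'
    exact key (g y) hm y hy y' hy' hadj (hgy ▸ hadj')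
  have := Set.ncard_le_ncard_of_injOn (t := (M : Set (Sym2 U))) g
    (fun y hy => (hgmem y hy).1) hinj M.finite_toSet
  rwa [Set.ncard_coe_finset] at this
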